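/- Let H = (1/m) Σ_{i=1}^m (I − P̃_i) be a uniform stoquastic k-local Hamiltonian and let ψ be a non-negative unit vector on ℂ^(Σ^n). Let N = {x ∈ supp(ψ) : there exist i ∈ {1,…,m} and y ∉ supp(ψ) with ⟨x|P̃_i|y⟩ > 0}. Then ⟨ψ|H|ψ⟩ ≥ (1/(|Σ|^k · m)) · Σ_{x∈N} ψ_x². -/

import Mathlib

open Matrix Classical

/-- A uniform stoquastic `k`-local term on strings in `Σ^n`: a set `Q` of at most `k` qudits
together with a finite family of pairwise disjoint nonempty subsets of `Σ^Q`. -/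
structure UTerm (A : Type) [Fintype A] [DecidableEq A] (n k : ℕ) where
  Q : Finset (Fin n)
  hQ : Q.card ≤ k
  J : ℕ
  T : Fin J → Finset ({ i : Fin n // i ∈ Q } → A)
  hT : ∀ j, (T j).Nonempty
  hdisj : ∀ j j', j ≠ j' → Disjoint (T j) (T j')

variable {A : Type} [Fintype A] [DecidableEq A] {n k : ℕ}

/-- The string equal to `t` on `Q` and to `z` on `Qᶜ`. -/
def glue (Q : Finset (Fin n)) (t : { i : Fin n // i ∈ Q } → A)
    (z : { i : Fin n // i ∉ Q } → A) : Fin n → A :=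
  fun i => if h : i ∈ Q then t ⟨i, h⟩ else z ⟨i, h⟩

/-- The subset state `|T_j , z⟩` of a local term. -/
noncomputable def UTerm.tvec (P : UTerm A n k) (j : Fin P.J)
    (z : { i : Fin n // i ∉ P.Q } → A) : (Fin n → A) → ℂ :=
  ((Real.sqrt (P.T j).card : ℂ))⁻¹ •
    (∑ t ∈ P.T j, Pi.single (glue P.Q t z) (1 : ℂ) : (Fin n → A) → ℂ)

/-- The groundspace projector `P̃ = Σ_j Σ_z |T_j,z⟩⟨T_j,z|` of a uniform stoquastic local term. -/
noncomputable def UTerm.proj (P : UTerm A n k) : Matrix (Fin n → A) (Fin n → A) ℂ :=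
  ∑ j : Fin P.J, ∑ z : { i : Fin n // i ∉ P.Q } → A,
    vecMulVec (P.tvec j z) (star (P.tvec j z))

/-- The uniform stoquastic local Hamiltonian `H = (1/m) Σᵢ (I - P̃ᵢ)`. -/
noncomputable def ham {m : ℕ} (terms : Fin m → UTerm A n k) :
    Matrix (Fin n → A) (Fin n → A) ℂ :=
  ((m : ℂ))⁻¹ • ∑ i, (1 - (terms i).proj)

/-- A string is bad for `H` if its diagonal entry in some groundspace projector vanishes. -/
def Bad {m : ℕ} (terms : Fin m → UTerm A n k) (x : Fin n → A) : Prop :=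
  ∃ i, (terms i).proj x x = 0

/-- `H` is `ε`-frustrated: every unit vector has energy at least `ε`. -/
def Frustrated {m : ℕ} (terms : Fin m → UTerm A n k) (ε : ℝ) : Prop :=
  ∀ ψ : (Fin n → A) → ℂ, ∑ x, ‖ψ x‖ ^ 2 = 1 →
    ε ≤ (star ψ ⬝ᵥ (ham terms).mulVec ψ).re

/-- Every qudit lies in at most `d` of the sets `Qᵢ`. -/
def DegreeBound {m : ℕ} (terms : Fin m → UTerm A n k) (d : ℕ) : Prop :=
  ∀ q : Fin n, (Finset.univ.filter (fun i => q ∈ (terms i).Q)).card ≤ d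

/-- The subset state of a finite set `S`. -/
noncomputable def subsetState {X : Type} [DecidableEq X] (S : Finset X) : X → ℂ :=
  fun x => if x ∈ S then ((Real.sqrt S.card : ℂ))⁻¹ else 0

set_option linter.unusedSectionVars false
set_option linter.unusedVariables false

section AuxStmt16

def rQ (Q : Finset (Fin n)) (x : Fin n → A) : {i : Fin n // i ∈ Q} → A := fun i => x i.1
def rZ (Q : Finset (Fin n)) (x : Fin n → A) : {i : Fin n // i ∉ Q} → A := fun i => x i.1

lemma rQ_glue (Q : Finset (Fin n)) (t : {i : Fin n // i ∈ Q} → A)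
    (z : {i : Fin n // i ∉ Q} → A) : rQ Q (glue Q t z) = t := by
  funext i; simp [rQ, glue, i.2]

lemma rZ_glue (Q : Finset (Fin n)) (t : {i : Fin n // i ∈ Q} → A)
    (z : {i : Fin n // i ∉ Q} → A) : rZ Q (glue Q t z) = z := by
  funext i; simp [rZ, glue, i.2]

lemma glue_rQ_rZ (Q : Finset (Fin n)) (x : Fin n → A) : glue Q (rQ Q x) (rZ Q x) = x := by
  funext i; by_cases h : i ∈ Q <;> simp [glue, rQ, rZ, h]

noncomputable def rv (P : UTerm A n k) (j : Fin P.J) (z : {i : Fin n // i ∉ P.Q} → A)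
    (x : Fin n → A) : ℝ :=
  (Real.sqrt (P.T j).card)⁻¹ * ∑ t ∈ P.T j, (if x = glue P.Q t z then (1:ℝ) else 0)

lemma rv_nonneg (P : UTerm A n k) (j z x) : 0 ≤ rv P j z x := by
  apply mul_nonneg (inv_nonneg.mpr (Real.sqrt_nonneg _))
  exact Finset.sum_nonneg fun t _ => by split <;> norm_num

lemma tvec_eq (P : UTerm A n k) (j z x) : P.tvec j z x = (rv P j z x : ℂ) := by
  simp [UTerm.tvec, rv, Finset.sum_apply, Pi.single_apply]

lemma proj_eq (P : UTerm A n k) (x y) :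
    P.proj x y = ((∑ j, ∑ z, rv P j z x * rv P j z y : ℝ) : ℂ) := by
  simp [UTerm.proj, Matrix.sum_apply, Matrix.vecMulVec_apply, tvec_eq, Pi.star_apply,
    Complex.conj_ofReal]

lemma proj_re (P : UTerm A n k) (x y) :
    (P.proj x y).re = ∑ j, ∑ z, rv P j z x * rv P j z y := by
  rw [proj_eq]; exact Complex.ofReal_re _

lemma rv_ne (P : UTerm A n k) {j z x} (h : rv P j z x ≠ 0) :
    ∃ t ∈ P.T j, x = glue P.Q t z := by
  by_contra hc
  push_neg at hc
  exact h (by simp [rv, Finset.sum_eq_zero fun t ht => if_neg (hc t ht)])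

lemma jOf_unique (P : UTerm A n k) {j j' : Fin P.J} {t} (h : t ∈ P.T j) (h' : t ∈ P.T j') :
    j = j' := by
  by_contra hne
  exact (Finset.disjoint_left.mp (P.hdisj j j' hne) h) h'

def gluEquiv (Q : Finset (Fin n)) :
    (({i : Fin n // i ∈ Q} → A) × ({i : Fin n // i ∉ Q} → A)) ≃ (Fin n → A) where
  toFun p := glue Q p.1 p.2
  invFun x := (rQ Q x, rZ Q x)
  left_inv p := by cases p with | mk t z => simp [rQ_glue, rZ_glue]
  right_inv x := glue_rQ_rZ Q x

lemma reindex (P : UTerm A n k) (H : (Fin n → A) → ℝ)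
    (hH : ∀ x, (∀ j, rQ P.Q x ∉ P.T j) → H x = 0) :
    ∑ j, ∑ z, ∑ t ∈ P.T j, H (glue P.Q t z) = ∑ x, H x := by
  classical
  have step1 : ∀ j : Fin P.J, (∑ z, ∑ t ∈ P.T j, H (glue P.Q t z))
      = ∑ x : Fin n → A, if rQ P.Q x ∈ P.T j then H x else 0 := by
    intro j
    have he := Fintype.sum_equiv (gluEquiv (A := A) (n := n) P.Q)
      (fun p => if p.1 ∈ P.T j then H (glue P.Q p.1 p.2) else 0)
      (fun x => if rQ P.Q x ∈ P.T j then H x else 0)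
      (fun p => by simp [gluEquiv, rQ_glue])
    rw [← he, Fintype.sum_prod_type, Finset.sum_comm]
    have hpull : ∀ t, (∑ z, if t ∈ P.T j then H (glue P.Q t z) else 0)
        = if t ∈ P.T j then ∑ z, H (glue P.Q t z) else 0 := fun t => by
      by_cases h : t ∈ P.T j <;> simp [h]
    simp_rw [hpull]
    rw [Finset.sum_ite_mem, Finset.univ_inter]
  calc ∑ j, ∑ z, ∑ t ∈ P.T j, H (glue P.Q t z)
      = ∑ j, ∑ x : Fin n → A, if rQ P.Q x ∈ P.T j then H x else 0 :=
        Finset.sum_congr rfl fun j _ => step1 j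
    _ = ∑ x : Fin n → A, ∑ j, (if rQ P.Q x ∈ P.T j then H x else 0) := Finset.sum_comm
    _ = ∑ x, H x := by
        refine Finset.sum_congr rfl fun x _ => ?_
        by_cases hx : ∃ j, rQ P.Q x ∈ P.T j
        · obtain ⟨j₀, hj₀⟩ := hx
          rw [Finset.sum_eq_single j₀
            (fun j _ hne => if_neg (fun hmem => hne (jOf_unique P hmem hj₀)))
            (fun h => absurd (Finset.mem_univ j₀) h)]
          rw [if_pos hj₀]
        · push_neg at hx
          rw [Finset.sum_eq_zero (fun j _ => if_neg (hx j)), hH x hx]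

lemma block_ineq {β : Type} [DecidableEq β] (T : Finset β) (hT : T.Nonempty) (g : β → ℝ)
    (hg : ∀ t, 0 ≤ g t) (D : ℝ) (hD : (T.card : ℝ) ≤ D)
    (hbad : ∃ t₀ ∈ T, g t₀ = 0) :
    D⁻¹ * ∑ t ∈ T, g t ^ 2 ≤ ∑ t ∈ T, g t ^ 2 - ((T.card : ℝ))⁻¹ * (∑ t ∈ T, g t) ^ 2 := by
  obtain ⟨t₀, ht₀, hgt₀⟩ := hbad
  have hc1 : (1:ℝ) ≤ (T.card : ℝ) := by exact_mod_cast hT.card_pos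
  have hc0 : (0:ℝ) < (T.card : ℝ) := lt_of_lt_of_le one_pos hc1
  have hSnn : (0:ℝ) ≤ ∑ t ∈ T, g t ^ 2 := Finset.sum_nonneg fun t _ => sq_nonneg _
  have hCS : (∑ t ∈ T, g t)^2 ≤ ((T.card : ℝ) - 1) * ∑ t ∈ T, g t ^2 := by
    have h1 : ∑ t ∈ T, g t = ∑ t ∈ T.erase t₀, g t := (Finset.sum_erase _ hgt₀).symm
    have h2 : (∑ t ∈ T.erase t₀, g t)^2 ≤ (T.erase t₀).card * ∑ t ∈ T.erase t₀, g t^2 :=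
      sq_sum_le_card_mul_sum_sq
    have h3 : ∑ t ∈ T.erase t₀, g t^2 ≤ ∑ t ∈ T, g t^2 :=
      Finset.sum_le_sum_of_subset_of_nonneg (Finset.erase_subset _ _)
        (fun t _ _ => sq_nonneg _)
    have hcard : ((T.erase t₀).card : ℝ) = (T.card : ℝ) - 1 := by
      rw [Finset.card_erase_of_mem ht₀]
      have := hT.card_pos
      push_cast [Nat.cast_sub this]
      ring
    have h2' : (∑ t ∈ T.erase t₀, g t)^2 ≤ ((T.card:ℝ) - 1) * ∑ t ∈ T.erase t₀, g t^2 := by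
      rw [← hcard]; exact h2
    have h4 : ((T.card:ℝ)-1) * ∑ t ∈ T.erase t₀, g t^2 ≤ ((T.card:ℝ)-1) * ∑ t ∈ T, g t^2 :=
      mul_le_mul_of_nonneg_left h3 (by linarith)
    rw [h1]
    linarith
  have hDinv : D⁻¹ ≤ ((T.card : ℝ))⁻¹ := by
    exact inv_anti₀ hc0 hD
  have key : ((T.card:ℝ))⁻¹ * ∑ t ∈ T, g t ^2
      ≤ ∑ t ∈ T, g t ^ 2 - ((T.card : ℝ))⁻¹ * (∑ t ∈ T, g t) ^ 2 := by
    have h4 := mul_le_mul_of_nonneg_left hCS (inv_nonneg.mpr hc0.le)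
    have h5 : ((T.card:ℝ))⁻¹ * (((T.card:ℝ) - 1) * ∑ t ∈ T, g t^2)
        = ∑ t ∈ T, g t^2 - ((T.card:ℝ))⁻¹ * ∑ t ∈ T, g t^2 := by
      field_simp
    linarith
  have h6 : D⁻¹ * ∑ t ∈ T, g t ^2 ≤ ((T.card:ℝ))⁻¹ * ∑ t ∈ T, g t ^2 :=
    mul_le_mul_of_nonneg_right hDinv hSnn
  linarith

lemma block_ineq0 {β : Type} [DecidableEq β] (T : Finset β) (hT : T.Nonempty) (g : β → ℝ) :
    (0:ℝ) ≤ ∑ t ∈ T, g t ^ 2 - ((T.card : ℝ))⁻¹ * (∑ t ∈ T, g t) ^ 2 := by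
  have hc0 : (0:ℝ) < (T.card : ℝ) := by exact_mod_cast hT.card_pos
  have hCS : (∑ t ∈ T, g t)^2 ≤ (T.card : ℝ) * ∑ t ∈ T, g t ^2 := sq_sum_le_card_mul_sum_sq
  rw [sub_nonneg, inv_mul_le_iff₀ hc0]
  exact hCS

lemma per_term (P : UTerm A n k) (hA1 : 1 ≤ Fintype.card A)
    (ψ : (Fin n → A) → ℂ) (hψnn : ∀ x, (ψ x).im = 0 ∧ 0 ≤ (ψ x).re) :
    ((Fintype.card A : ℝ) ^ k)⁻¹ *
        ∑ x ∈ Finset.univ.filter (fun x => ψ x ≠ 0 ∧ ∃ y, ψ y = 0 ∧ 0 < (P.proj x y).re),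
          (ψ x).re ^ 2
      ≤ (∑ x, (ψ x).re ^ 2)
        - ∑ j, ∑ z, (((P.T j).card : ℝ))⁻¹ * (∑ t ∈ P.T j, (ψ (glue P.Q t z)).re) ^ 2 := by
  classical
  set f : (Fin n → A) → ℝ := fun x => (ψ x).re with hfdef
  have hψ0 : ∀ x, ψ x = 0 ↔ f x = 0 := by
    intro x
    constructor
    · intro h; simp [hfdef, h]
    · intro h
      have him := (hψnn x).1
      apply Complex.ext <;> simp [him, h, hfdef] at *
      exact h
  set cond : (Fin n → A) → Prop :=
    fun x => ∃ j, rQ P.Q x ∈ P.T j ∧ ∃ t₀ ∈ P.T j, ψ (glue P.Q t₀ (rZ P.Q x)) = 0 with hconddef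
  set h : (Fin n → A) → ℝ := fun x => if cond x then f x ^ 2 else 0 with hhdef
  have hh0 : ∀ x, 0 ≤ h x := fun x => by
    simp only [hhdef]; split
    · exact sq_nonneg _
    · exact le_refl 0
  -- Step A
  have hmem : ∀ x, (ψ x ≠ 0 ∧ ∃ y, ψ y = 0 ∧ 0 < (P.proj x y).re) → cond x := by
    rintro x ⟨-, y, hy0, hpos⟩
    rw [proj_re] at hpos
    have hex : ∃ j, 0 < ∑ z, rv P j z x * rv P j z y := by
      by_contra hc
      push_neg at hc
      have := Finset.sum_nonpos (fun j (_ : j ∈ Finset.univ) => hc j)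
      linarith
    obtain ⟨j, hj⟩ := hex
    have hex2 : ∃ z, 0 < rv P j z x * rv P j z y := by
      by_contra hc
      push_neg at hc
      have := Finset.sum_nonpos (fun z (_ : z ∈ Finset.univ) => hc z)
      linarith
    obtain ⟨z, hz⟩ := hex2
    have hx : rv P j z x ≠ 0 := by
      intro h0; rw [h0, zero_mul] at hz; exact lt_irrefl _ hz
    have hy : rv P j z y ≠ 0 := by
      intro h0; rw [h0, mul_zero] at hz; exact lt_irrefl _ hz
    obtain ⟨t, ht, hxg⟩ := rv_ne P hx
    obtain ⟨t', ht', hyg⟩ := rv_ne P hy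
    refine ⟨j, ?_, t', ht', ?_⟩
    · rw [hxg, rQ_glue]; exact ht
    · rw [hxg, rZ_glue, ← hyg]; exact hy0
  -- Step B
  have hB : ∑ x ∈ Finset.univ.filter
      (fun x => ψ x ≠ 0 ∧ ∃ y, ψ y = 0 ∧ 0 < (P.proj x y).re), f x ^ 2 ≤ ∑ x, h x := by
    rw [Finset.sum_filter]
    refine Finset.sum_le_sum fun x _ => ?_
    by_cases hx : ψ x ≠ 0 ∧ ∃ y, ψ y = 0 ∧ 0 < (P.proj x y).re
    · rw [if_pos hx]
      have hcx := hmem x hx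
      simp only [hhdef, if_pos hcx]
      exact le_refl _
    · rw [if_neg hx]; exact hh0 x
  -- Step C
  set bad : Fin P.J → ({i : Fin n // i ∉ P.Q} → A) → Prop :=
    fun j z => ∃ t₀ ∈ P.T j, ψ (glue P.Q t₀ z) = 0 with hbaddef
  have hC : ∑ x, h x = ∑ j, ∑ z, (if bad j z then ∑ t ∈ P.T j, f (glue P.Q t z) ^ 2 else 0) := by
    rw [← reindex P h (fun x hx => by
      simp only [hhdef]
      refine if_neg ?_
      rintro ⟨j, hj, -⟩
      exact hx j hj)]
    refine Finset.sum_congr rfl fun j _ => Finset.sum_congr rfl fun z _ => ?_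
    by_cases hb : bad j z
    · rw [if_pos hb]
      refine Finset.sum_congr rfl fun t ht => ?_
      have hcond : cond (glue P.Q t z) := by
        refine ⟨j, ?_, ?_⟩
        · rw [rQ_glue]; exact ht
        · rw [rZ_glue]; exact hb
      simp only [hhdef, if_pos hcond]
    · rw [if_neg hb]
      refine Finset.sum_eq_zero fun t ht => ?_
      simp only [hhdef]
      refine if_neg ?_
      rintro ⟨j', hj', t₀, ht₀, h0⟩
      rw [rQ_glue] at hj'
      have hjj : j' = j := jOf_unique P hj' ht
      rw [rZ_glue] at h0
      exact hb ⟨t₀, hjj ▸ ht₀, h0⟩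
  -- card bound
  have hcard : ∀ j : Fin P.J, ((P.T j).card : ℝ) ≤ (Fintype.card A : ℝ)^k := by
    intro j
    have h1 : (P.T j).card ≤ Fintype.card ({i : Fin n // i ∈ P.Q} → A) := Finset.card_le_univ _
    have h2 : Fintype.card ({i : Fin n // i ∈ P.Q} → A) = Fintype.card A ^ (P.Q.card) := by
      simp [Fintype.card_fun, Fintype.card_coe]
    have h3 : Fintype.card A ^ P.Q.card ≤ Fintype.card A ^ k := Nat.pow_le_pow_right hA1 P.hQ
    have := le_trans (h1.trans_eq h2) h3
    exact_mod_cast this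
  -- Step D
  have hD : ∀ j z, ((Fintype.card A:ℝ)^k)⁻¹ * (if bad j z then ∑ t ∈ P.T j, f (glue P.Q t z)^2 else 0)
      ≤ ∑ t ∈ P.T j, f (glue P.Q t z)^2
        - ((P.T j).card : ℝ)⁻¹ * (∑ t ∈ P.T j, f (glue P.Q t z))^2 := by
    intro j z
    by_cases hb : bad j z
    · rw [if_pos hb]
      obtain ⟨t₀, ht₀, h0⟩ := hb
      exact block_ineq (P.T j) (P.hT j) _ (fun t => (hψnn _).2) _ (hcard j)
        ⟨t₀, ht₀, (hψ0 _).mp h0⟩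
    · rw [if_neg hb, mul_zero]
      exact block_ineq0 (P.T j) (P.hT j) _
  -- triple sum bound
  have hTS : ∑ j, ∑ z, ∑ t ∈ P.T j, f (glue P.Q t z)^2 ≤ ∑ x, f x ^ 2 := by
    have hre := reindex P (fun x => if (∃ j, rQ P.Q x ∈ P.T j) then f x^2 else 0)
      (fun x hx => if_neg (by rintro ⟨j, hj⟩; exact hx j hj))
    have hls : ∑ j, ∑ z, ∑ t ∈ P.T j, f (glue P.Q t z)^2
        = ∑ j, ∑ z, ∑ t ∈ P.T j,
          (if (∃ j', rQ P.Q (glue P.Q t z) ∈ P.T j') then f (glue P.Q t z)^2 else 0) := by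
      refine Finset.sum_congr rfl fun j _ => Finset.sum_congr rfl fun z _ =>
        Finset.sum_congr rfl fun t ht => ?_
      rw [if_pos ⟨j, by rw [rQ_glue]; exact ht⟩]
    rw [hls, hre]
    refine Finset.sum_le_sum fun x _ => ?_
    split
    · exact le_refl _
    · exact sq_nonneg _
  -- assembly
  have hinvnn : (0:ℝ) ≤ ((Fintype.card A : ℝ)^k)⁻¹ := by positivity
  calc ((Fintype.card A : ℝ) ^ k)⁻¹ *
        ∑ x ∈ Finset.univ.filter
          (fun x => ψ x ≠ 0 ∧ ∃ y, ψ y = 0 ∧ 0 < (P.proj x y).re), f x ^ 2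
      ≤ ((Fintype.card A : ℝ) ^ k)⁻¹ * ∑ x, h x := mul_le_mul_of_nonneg_left hB hinvnn
    _ = ∑ j, ∑ z, ((Fintype.card A : ℝ)^k)⁻¹ *
          (if bad j z then ∑ t ∈ P.T j, f (glue P.Q t z) ^ 2 else 0) := by
        rw [hC, Finset.mul_sum]
        exact Finset.sum_congr rfl fun j _ => Finset.mul_sum _ _ _
    _ ≤ ∑ j, ∑ z, (∑ t ∈ P.T j, f (glue P.Q t z)^2
          - ((P.T j).card : ℝ)⁻¹ * (∑ t ∈ P.T j, f (glue P.Q t z))^2) :=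
        Finset.sum_le_sum fun j _ => Finset.sum_le_sum fun z _ => hD j z
    _ = (∑ j, ∑ z, ∑ t ∈ P.T j, f (glue P.Q t z)^2)
          - ∑ j, ∑ z, ((P.T j).card : ℝ)⁻¹ * (∑ t ∈ P.T j, f (glue P.Q t z))^2 := by
        rw [← Finset.sum_sub_distrib]
        exact Finset.sum_congr rfl fun j _ => Finset.sum_sub_distrib _ _
    _ ≤ (∑ x, f x ^ 2)
          - ∑ j, ∑ z, ((P.T j).card : ℝ)⁻¹ * (∑ t ∈ P.T j, f (glue P.Q t z))^2 :=
        sub_le_sub_right hTS _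

lemma sum_mulVec' {ι X : Type} [Fintype X] (s : Finset ι) (M : ι → Matrix X X ℂ) (v : X → ℂ) :
    (∑ i ∈ s, M i).mulVec v = ∑ i ∈ s, (M i).mulVec v := by
  ext x
  simp [Matrix.mulVec, dotProduct, Matrix.sum_apply, Finset.sum_mul, Finset.sum_apply]
  exact Finset.sum_comm

lemma dotProduct_sum' {ι X : Type} [Fintype X] (s : Finset ι) (w : X → ℂ) (v : ι → X → ℂ) :
    w ⬝ᵥ (∑ i ∈ s, v i) = ∑ i ∈ s, w ⬝ᵥ v i := by
  simp [dotProduct, Finset.mul_sum, Finset.sum_apply]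
  exact Finset.sum_comm

lemma vecMulVec_mulVec' {X : Type} [Fintype X] (u v w : X → ℂ) :
    (vecMulVec u v).mulVec w = (v ⬝ᵥ w) • u := by
  ext x
  simp only [Matrix.mulVec, Matrix.vecMulVec_apply, dotProduct, Pi.smul_apply,
    smul_eq_mul, Finset.sum_mul]
  exact Finset.sum_congr rfl fun y _ => by ring

lemma rv_dot (P : UTerm A n k) (j : Fin P.J) (z : {i : Fin n // i ∉ P.Q} → A)
    (g : (Fin n → A) → ℝ) :
    ∑ x, rv P j z x * g x
      = (Real.sqrt (P.T j).card)⁻¹ * ∑ t ∈ P.T j, g (glue P.Q t z) := by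
  classical
  calc ∑ x, rv P j z x * g x
      = ∑ x, ∑ t ∈ P.T j,
          (Real.sqrt (P.T j).card)⁻¹ * (if x = glue P.Q t z then g x else 0) := by
        refine Finset.sum_congr rfl fun x _ => ?_
        rw [rv, mul_assoc, Finset.sum_mul, Finset.mul_sum]
        refine Finset.sum_congr rfl fun t _ => ?_
        split <;> ring
    _ = ∑ t ∈ P.T j, ∑ x,
          (Real.sqrt (P.T j).card)⁻¹ * (if x = glue P.Q t z then g x else 0) :=
        Finset.sum_comm
    _ = (Real.sqrt (P.T j).card)⁻¹ * ∑ t ∈ P.T j, g (glue P.Q t z) := by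
        rw [Finset.mul_sum]
        refine Finset.sum_congr rfl fun t _ => ?_
        rw [← Finset.mul_sum]
        congr 1
        rw [Finset.sum_ite_eq' Finset.univ (glue P.Q t z) g]
        simp

lemma dot_right (P : UTerm A n k) (j : Fin P.J) (z : {i : Fin n // i ∉ P.Q} → A)
    (ψ : (Fin n → A) → ℂ) (him : ∀ x, (ψ x).im = 0) :
    star (P.tvec j z) ⬝ᵥ ψ
      = (((Real.sqrt (P.T j).card)⁻¹ * ∑ t ∈ P.T j, (ψ (glue P.Q t z)).re : ℝ) : ℂ) := by
  classical
  have hψ : ∀ x, ψ x = (((ψ x).re : ℝ) : ℂ) := fun x => by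
    apply Complex.ext <;> simp [him x]
  have hterm : ∀ x, star (P.tvec j z) x * ψ x
      = ((rv P j z x * (ψ x).re : ℝ) : ℂ) := fun x => by
    conv_lhs => rw [Pi.star_apply, tvec_eq, hψ x]
    rw [Complex.star_def, Complex.conj_ofReal, ← Complex.ofReal_mul]
  rw [dotProduct, Finset.sum_congr rfl fun x _ => hterm x, ← Complex.ofReal_sum]
  rw [rv_dot]

lemma dot_left (P : UTerm A n k) (j : Fin P.J) (z : {i : Fin n // i ∉ P.Q} → A)
    (ψ : (Fin n → A) → ℂ) (him : ∀ x, (ψ x).im = 0) :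
    star ψ ⬝ᵥ P.tvec j z
      = (((Real.sqrt (P.T j).card)⁻¹ * ∑ t ∈ P.T j, (ψ (glue P.Q t z)).re : ℝ) : ℂ) := by
  classical
  have hψ : ∀ x, ψ x = (((ψ x).re : ℝ) : ℂ) := fun x => by
    apply Complex.ext <;> simp [him x]
  have hterm : ∀ x, star ψ x * P.tvec j z x
      = ((rv P j z x * (ψ x).re : ℝ) : ℂ) := fun x => by
    conv_lhs => rw [Pi.star_apply, tvec_eq, hψ x]
    rw [Complex.star_def, Complex.conj_ofReal, ← Complex.ofReal_mul, mul_comm]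
  rw [dotProduct, Finset.sum_congr rfl fun x _ => hterm x, ← Complex.ofReal_sum]
  rw [rv_dot]

lemma energy_re {m : ℕ} (terms : Fin m → UTerm A n k)
    (ψ : (Fin n → A) → ℂ) (him : ∀ x, (ψ x).im = 0) :
    (star ψ ⬝ᵥ (ham terms).mulVec ψ).re
      = (m : ℝ)⁻¹ * ∑ i, ((∑ x, (ψ x).re ^ 2)
          - ∑ j, ∑ z, (((terms i).T j).card : ℝ)⁻¹
              * (∑ t ∈ (terms i).T j, (ψ (glue (terms i).Q t z)).re) ^ 2) := by
  classical
  have hψ : ∀ x, ψ x = (((ψ x).re : ℝ) : ℂ) := fun x => by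
    apply Complex.ext <;> simp [him x]
  have hterm : ∀ i : Fin m, star ψ ⬝ᵥ ((1 : Matrix (Fin n → A) (Fin n → A) ℂ)
        - (terms i).proj).mulVec ψ
      = (((∑ x, (ψ x).re ^ 2)
          - ∑ j, ∑ z, (((terms i).T j).card : ℝ)⁻¹
              * (∑ t ∈ (terms i).T j, (ψ (glue (terms i).Q t z)).re) ^ 2 : ℝ) : ℂ) := by
    intro i
    rw [Matrix.sub_mulVec, Matrix.one_mulVec, dotProduct_sub]
    have h1 : star ψ ⬝ᵥ ψ = ((∑ x, (ψ x).re ^ 2 : ℝ) : ℂ) := by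
      have ht : ∀ x : Fin n → A, star ψ x * ψ x = (((ψ x).re ^ 2 : ℝ) : ℂ) := fun x => by
        conv_lhs => rw [Pi.star_apply, hψ x]
        rw [Complex.star_def, Complex.conj_ofReal, ← Complex.ofReal_mul, ← sq]
      rw [dotProduct, Finset.sum_congr rfl fun x _ => ht x, ← Complex.ofReal_sum]
    have h2 : star ψ ⬝ᵥ (terms i).proj.mulVec ψ
        = ((∑ j, ∑ z, (((terms i).T j).card : ℝ)⁻¹
            * (∑ t ∈ (terms i).T j, (ψ (glue (terms i).Q t z)).re) ^ 2 : ℝ) : ℂ) := by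
      have hjz : ∀ (j : Fin (terms i).J) (z : {x : Fin n // x ∉ (terms i).Q} → A),
          star ψ ⬝ᵥ (vecMulVec ((terms i).tvec j z) (star ((terms i).tvec j z))).mulVec ψ
            = (((((terms i).T j).card : ℝ)⁻¹
                * (∑ t ∈ (terms i).T j, (ψ (glue (terms i).Q t z)).re) ^ 2 : ℝ) : ℂ) := by
        intro j z
        rw [vecMulVec_mulVec', dotProduct_smul, smul_eq_mul,
          dot_right _ _ _ _ him, dot_left _ _ _ _ him, ← Complex.ofReal_mul]
        congr 1
        have hs : Real.sqrt ((((terms i).T j).card : ℝ))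
            * Real.sqrt ((((terms i).T j).card : ℝ)) = (((terms i).T j).card : ℝ) :=
          Real.mul_self_sqrt (Nat.cast_nonneg _)
        conv_rhs => rw [← hs, mul_inv]
        ring
      rw [UTerm.proj, sum_mulVec', dotProduct_sum']
      rw [Finset.sum_congr rfl fun j (_ : j ∈ Finset.univ) => by
        rw [sum_mulVec', dotProduct_sum',
          Finset.sum_congr rfl fun z (_ : z ∈ Finset.univ) => hjz j z, ← Complex.ofReal_sum]]
      rw [← Complex.ofReal_sum]
    rw [h1, h2, ← Complex.ofReal_sub]
  rw [ham, Matrix.smul_mulVec, dotProduct_smul, sum_mulVec', dotProduct_sum']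
  rw [Finset.sum_congr rfl fun i _ => hterm i, ← Complex.ofReal_sum, smul_eq_mul]
  have hminv : ((m : ℂ))⁻¹ = (((m : ℝ)⁻¹ : ℝ) : ℂ) := by push_cast; ring
  rw [hminv, ← Complex.ofReal_mul, Complex.ofReal_re]

end AuxStmt16

/-- Projection on the boundary lower bounds the energy: for a non-negative unit vector `ψ`,
the weight of the strings in `supp(ψ)` connected by some term to a string outside `supp(ψ)`
is at most `|Σ|^k · m` times the energy of `ψ`. -/
theorem stmt16 {A : Type} [Fintype A] [DecidableEq A] (hA : 2 ≤ Fintype.card A)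
    {n k m : ℕ} (hn : 1 ≤ n) (hk : 1 ≤ k) (hm : 1 ≤ m)
    (terms : Fin m → UTerm A n k)
    (ψ : (Fin n → A) → ℂ) (hψnn : ∀ x, (ψ x).im = 0 ∧ 0 ≤ (ψ x).re)
    (hψunit : ∑ x, ‖ψ x‖ ^ 2 = 1) :
    (((Fintype.card A : ℝ) ^ k * m))⁻¹ *
      ∑ x ∈ Finset.univ.filter
        (fun x => ψ x ≠ 0 ∧ ∃ i, ∃ y, ψ y = 0 ∧ 0 < ((terms i).proj x y).re),
        (ψ x).re ^ 2 ≤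
      (star ψ ⬝ᵥ (ham terms).mulVec ψ).re := by
  classical
  have him : ∀ x, (ψ x).im = 0 := fun x => (hψnn x).1
  rw [energy_re terms ψ him]
  have hper : ∀ i : Fin m, ((Fintype.card A : ℝ)^k)⁻¹ *
      ∑ x ∈ Finset.univ.filter
        (fun x => ψ x ≠ 0 ∧ ∃ y, ψ y = 0 ∧ 0 < ((terms i).proj x y).re), (ψ x).re^2
      ≤ (∑ x, (ψ x).re ^ 2)
        - ∑ j, ∑ z, (((terms i).T j).card : ℝ)⁻¹
            * (∑ t ∈ (terms i).T j, (ψ (glue (terms i).Q t z)).re) ^ 2 :=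
    fun i => per_term (terms i) (le_trans one_le_two hA) ψ hψnn
  have hsplit : (∑ x ∈ Finset.univ.filter
        (fun x => ψ x ≠ 0 ∧ ∃ i, ∃ y, ψ y = 0 ∧ 0 < ((terms i).proj x y).re), (ψ x).re ^ 2)
      ≤ ∑ i : Fin m, ∑ x ∈ Finset.univ.filter
          (fun x => ψ x ≠ 0 ∧ ∃ y, ψ y = 0 ∧ 0 < ((terms i).proj x y).re), (ψ x).re^2 := by
    rw [Finset.sum_filter]
    rw [Finset.sum_congr rfl fun i (_ : i ∈ Finset.univ) => Finset.sum_filter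
      (fun x => ψ x ≠ 0 ∧ ∃ y, ψ y = 0 ∧ 0 < ((terms i).proj x y).re)
      (fun x => (ψ x).re ^ 2)]
    rw [Finset.sum_comm]
    refine Finset.sum_le_sum fun x _ => ?_
    by_cases hx : ψ x ≠ 0 ∧ ∃ i, ∃ y, ψ y = 0 ∧ 0 < ((terms i).proj x y).re
    · rw [if_pos hx]
      obtain ⟨hx0, i₀, y, hy⟩ := hx
      have h1 : (if (ψ x ≠ 0 ∧ ∃ y, ψ y = 0 ∧ 0 < ((terms i₀).proj x y).re)
          then (ψ x).re^2 else 0) = (ψ x).re^2 := if_pos ⟨hx0, y, hy⟩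
      refine le_trans (le_of_eq h1.symm) (Finset.single_le_sum
        (f := fun i => if (ψ x ≠ 0 ∧ ∃ y, ψ y = 0 ∧ 0 < ((terms i).proj x y).re)
          then (ψ x).re^2 else 0)
        (fun i _ => ite_nonneg (sq_nonneg _) (le_refl 0)) (Finset.mem_univ i₀))
    · rw [if_neg hx]
      exact Finset.sum_nonneg fun i _ => by split; exacts [sq_nonneg _, le_refl 0]
  have hmnn : (0:ℝ) ≤ (m:ℝ)⁻¹ := by positivity
  have hck : (0:ℝ) ≤ ((Fintype.card A:ℝ)^k)⁻¹ := by positivity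
  calc (((Fintype.card A : ℝ) ^ k * m))⁻¹ *
        ∑ x ∈ Finset.univ.filter
          (fun x => ψ x ≠ 0 ∧ ∃ i, ∃ y, ψ y = 0 ∧ 0 < ((terms i).proj x y).re), (ψ x).re ^ 2
      = (m:ℝ)⁻¹ * (((Fintype.card A:ℝ)^k)⁻¹ *
          ∑ x ∈ Finset.univ.filter
            (fun x => ψ x ≠ 0 ∧ ∃ i, ∃ y, ψ y = 0 ∧ 0 < ((terms i).proj x y).re),
            (ψ x).re ^ 2) := by
        rw [mul_inv]; ring
    _ ≤ (m:ℝ)⁻¹ * (((Fintype.card A:ℝ)^k)⁻¹ *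
          ∑ i : Fin m, ∑ x ∈ Finset.univ.filter
            (fun x => ψ x ≠ 0 ∧ ∃ y, ψ y = 0 ∧ 0 < ((terms i).proj x y).re), (ψ x).re^2) :=
        mul_le_mul_of_nonneg_left (mul_le_mul_of_nonneg_left hsplit hck) hmnn
    _ = (m:ℝ)⁻¹ * ∑ i : Fin m, ((Fintype.card A:ℝ)^k)⁻¹ *
          ∑ x ∈ Finset.univ.filter
            (fun x => ψ x ≠ 0 ∧ ∃ y, ψ y = 0 ∧ 0 < ((terms i).proj x y).re), (ψ x).re^2 := by
        rw [Finset.mul_sum]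
    _ ≤ (m:ℝ)⁻¹ * ∑ i, ((∑ x, (ψ x).re ^ 2)
          - ∑ j, ∑ z, (((terms i).T j).card : ℝ)⁻¹
              * (∑ t ∈ (terms i).T j, (ψ (glue (terms i).Q t z)).re) ^ 2) :=
        mul_le_mul_of_nonneg_left (Finset.sum_le_sum fun i _ => hper i) hmnn
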